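/- Let n ≥ 1, a : Fin n → ℝ and b ∈ ℝ with 0 < a i < b for all i, and let λ ∈ ℝ satisfy λ < a i for all i and λ > -∞ with a i - λ > 0 and b - λ > 0 (e.g. 0 ≤ λ < a i suffices). Define the linear map f_λ on ℝ^{n+1} by multiplying the coordinate x_i by Real.sqrt ((a i - λ)/(a i)) for i ≥ 1 and the coordinate x₀ by Real.sqrt ((b - λ)/b). If x ∈ ℝ^{n+1} satisfies B(x,x) = -(x 0)^2 + ∑_{i=1}^n (x i)^2 = -1, x 0 > 0, and q(x) = ∑_{i=1}^n (x i)^2/a i - (x 0)^2/b = 0, then f_λ x satisfies B(f_λ x, f_λ x) = -1, (f_λ x) 0 > 0, and q_λ(f_λ x) = ∑_{i=1}^n ((f_λ x) i)^2/(a i - λ) - ((f_λ x) 0)^2/(b - λ) = 0. (The map f_λ takes the hyperbolic ellipsoid E ⊂ ℍⁿ to the confocal hyperbolic ellipsoid E_λ.) -/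

import Mathlib

/-- The Minkowski bilinear form on `ℝ^{n+1}`: `B(x,y) = -x₀y₀ + ∑_{i=1}^n x_i y_i`. -/
def minkowskiForm (n : ℕ) (x y : Fin (n + 1) → ℝ) : ℝ :=
  -(x 0 * y 0) + ∑ i : Fin n, x i.succ * y i.succ

/-- The diagonal linear map `f_λ` (entries `√((a i - λ)/a i)` on `x_i`, `i ≥ 1`, and
`√((b - λ)/b)` on `x₀`) maps the hyperbolic ellipsoid `E ⊂ ℍⁿ` to the confocal hyperbolic
ellipsoid `E_λ`. -/
theorem hyperbolic_confocal_map (n : ℕ) (hn : 1 ≤ n) (a : Fin n → ℝ) (b : ℝ)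
    (ha : ∀ i, 0 < a i) (hab : ∀ i, a i < b)
    (lam : ℝ) (hlam : ∀ i, lam < a i) (hlamb : lam < b)
    (f : (Fin (n + 1) → ℝ) →ₗ[ℝ] (Fin (n + 1) → ℝ))
    (hf0 : ∀ x : Fin (n + 1) → ℝ, f x 0 = Real.sqrt ((b - lam) / b) * x 0)
    (hfi : ∀ (x : Fin (n + 1) → ℝ) (i : Fin n),
      f x i.succ = Real.sqrt ((a i - lam) / a i) * x i.succ)
    (x : Fin (n + 1) → ℝ)
    (hB : minkowskiForm n x x = -1) (hx0 : 0 < x 0)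
    (hq : ∑ i : Fin n, (x i.succ) ^ 2 / a i - (x 0) ^ 2 / b = 0) :
    minkowskiForm n (f x) (f x) = -1 ∧ 0 < f x 0 ∧
      ∑ i : Fin n, (f x i.succ) ^ 2 / (a i - lam) - (f x 0) ^ 2 / (b - lam) = 0 := by
  have i0 : Fin n := ⟨0, hn⟩
  have hb : 0 < b := (ha i0).trans (hab i0)
  have hbl : 0 < b - lam := by linarith
  have hal : ∀ i, 0 < a i - lam := fun i => by have := hlam i; linarith
  have s0 : Real.sqrt ((b - lam) / b) ^ 2 = (b - lam) / b :=
    Real.sq_sqrt (div_nonneg hbl.le hb.le)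
  have si : ∀ i, Real.sqrt ((a i - lam) / a i) ^ 2 = (a i - lam) / a i := fun i =>
    Real.sq_sqrt (div_nonneg (hal i).le (ha i).le)
  have hf0sq : (f x 0) ^ 2 = (b - lam) / b * (x 0) ^ 2 := by rw [hf0, mul_pow, s0]
  have hfisq : ∀ i, (f x i.succ) ^ 2 = (a i - lam) / a i * (x i.succ) ^ 2 := fun i => by
    rw [hfi, mul_pow, si i]
  have hq' : ∑ i : Fin n, (x i.succ) ^ 2 / a i = (x 0) ^ 2 / b := by linarith
  have hB' : -((x 0) ^ 2) + ∑ i : Fin n, (x i.succ) ^ 2 = -1 := by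
    have : minkowskiForm n x x = -((x 0) ^ 2) + ∑ i : Fin n, (x i.succ) ^ 2 := by
      simp [minkowskiForm, sq]
    linarith [this ▸ hB]
  have hS : ∑ i : Fin n, (x i.succ) ^ 2 = -1 + (x 0) ^ 2 := by linarith
  refine ⟨?_, ?_, ?_⟩
  · have hm : minkowskiForm n (f x) (f x)
        = -((f x 0) ^ 2) + ∑ i : Fin n, (f x i.succ) ^ 2 := by
      simp [minkowskiForm, sq]
    rw [hm, hf0sq]
    simp_rw [hfisq]
    have expand : ∀ i : Fin n, (a i - lam) / a i * (x i.succ) ^ 2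
        = (x i.succ) ^ 2 - lam * ((x i.succ) ^ 2 / a i) := fun i => by
      field_simp [(ha i).ne']
    simp_rw [expand]
    rw [Finset.sum_sub_distrib, ← Finset.mul_sum, hq', hS]
    field_simp
    ring
  · rw [hf0]
    exact mul_pos (Real.sqrt_pos.mpr (div_pos hbl hb)) hx0
  · have e0 : (f x 0) ^ 2 / (b - lam) = (x 0) ^ 2 / b := by
      rw [hf0sq]; field_simp
    have ei : ∀ i : Fin n, (f x i.succ) ^ 2 / (a i - lam) = (x i.succ) ^ 2 / a i := fun i => by
      rw [hfisq i]; field_simp [(ha i).ne', (hal i).ne']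
    simp_rw [ei, e0]
    exact hq
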